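/- Let q₋ and q₊ be two distinct elements of Q_k. Then for every continuously differentiable map w : ℝ → ℝ³ such that w(t) ∈ L_k for every t ∈ ℝ, w(t) → q₋ as t → −∞, and w(t) → q₊ as t → +∞, one has ∫_ℝ [(‖w(t)‖² − 1)² + ‖w'(t)‖²] dt ≥ 8/3 (the integral of the nonnegative integrand, possibly equal to +∞). -/

import Mathlib

open MeasureTheory Filter
open scoped RealInnerProductSpace

local notation "V3" => EuclideanSpace ℝ (Fin 3)

lemma aux_inter_zero {k : ℕ} (q : Fin k → V3) {l l₀ : Fin k}
    (hne : (Submodule.span ℝ {q l} : Submodule ℝ V3) ≠ Submodule.span ℝ {q l₀})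
    {x : V3} (h1 : x ∈ Submodule.span ℝ {q l}) (h2 : x ∈ Submodule.span ℝ {q l₀}) :
    x = 0 := by
  by_contra hx
  obtain ⟨a, ha⟩ := Submodule.mem_span_singleton.mp h1
  obtain ⟨b, hb⟩ := Submodule.mem_span_singleton.mp h2
  have ha0 : a ≠ 0 := by rintro rfl; simp at ha; exact hx ha.symm
  have hb0 : b ≠ 0 := by rintro rfl; simp at hb; exact hx hb.symm
  apply hne
  apply le_antisymm
  · rw [Submodule.span_singleton_le_iff_mem, Submodule.mem_span_singleton]
    exact ⟨a⁻¹ * b, by rw [mul_smul, hb, ← ha, inv_smul_smul₀ ha0]⟩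
  · rw [Submodule.span_singleton_le_iff_mem, Submodule.mem_span_singleton]
    exact ⟨b⁻¹ * a, by rw [mul_smul, ha, ← hb, inv_smul_smul₀ hb0]⟩

lemma aux_stay {k : ℕ} (q : Fin k → V3) (w : ℝ → V3) (hwc : Continuous w)
    (hL : ∀ t, w t ∈ ⋃ l, (Submodule.span ℝ {q l} : Set V3))
    {S : Set ℝ} (hS : IsPreconnected S) (hne0 : ∀ t ∈ S, w t ≠ 0)
    {l₀ : Fin k} {t₁ : ℝ} (ht₁ : t₁ ∈ S) (hw₁ : w t₁ ∈ (Submodule.span ℝ {q l₀} : Set V3)) :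
    ∀ t ∈ S, w t ∈ (Submodule.span ℝ {q l₀} : Set V3) := by
  set E : Set V3 := (Submodule.span ℝ {q l₀} : Set V3) with hE
  set C : Set V3 := ⋃ l ∈ {l : Fin k | Submodule.span ℝ {q l} ≠ Submodule.span ℝ {q l₀}},
    (Submodule.span ℝ {q l} : Set V3) with hC
  have hEc : IsClosed E := (Submodule.span ℝ {q l₀}).closed_of_finiteDimensional
  have hCc : IsClosed C :=
    Set.Finite.isClosed_biUnion (Set.toFinite _)
      (fun l _ => (Submodule.span ℝ {q l}).closed_of_finiteDimensional)
  have key : ∀ t, w t ∉ C → w t ∈ E := by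
    intro t ht
    obtain ⟨l, hl⟩ := Set.mem_iUnion.mp (hL t)
    by_cases h : Submodule.span ℝ {q l} = Submodule.span ℝ ({q l₀} : Set V3)
    · rw [hE]; rw [← h]; exact hl
    · exact absurd (Set.mem_iUnion₂.mpr ⟨l, h, hl⟩) ht
  have hnotboth : ∀ t ∈ S, w t ∈ E → w t ∉ C := by
    intro t ht hE' hC'
    obtain ⟨l, hlne, hl⟩ := Set.mem_iUnion₂.mp hC'
    exact hne0 t ht (aux_inter_zero q hlne hl hE')
  have hU : IsOpen (w ⁻¹' Cᶜ) := hCc.isOpen_compl.preimage hwc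
  have hV : IsOpen (w ⁻¹' Eᶜ) := hEc.isOpen_compl.preimage hwc
  have hdisj : Disjoint (w ⁻¹' Cᶜ) (w ⁻¹' Eᶜ) := by
    rw [Set.disjoint_left]
    intro t h1 h2
    exact h2 (key t h1)
  have hcov : S ⊆ (w ⁻¹' Cᶜ) ∪ (w ⁻¹' Eᶜ) := by
    intro t ht
    by_cases h : w t ∈ E
    · exact Or.inl (hnotboth t ht h)
    · exact Or.inr h
  have hne' : (S ∩ (w ⁻¹' Cᶜ)).Nonempty := ⟨t₁, ht₁, hnotboth t₁ ht₁ hw₁⟩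
  intro t ht
  exact key t (hS.subset_left_of_subset_union hU hV hdisj hcov hne' ht)

lemma aux_norm_one {k : ℕ} (q : Fin k → V3) (hq : ∀ l, ‖q l‖ = 1) {x : V3}
    (hx : x ∈ ⋃ l, ({q l, -q l} : Set V3)) : ‖x‖ = 1 := by
  obtain ⟨l, hl⟩ := Set.mem_iUnion.mp hx
  rcases hl with h | h <;> simp_all

lemma aux_exists_zero {k : ℕ} (q : Fin k → V3) (hq : ∀ l, ‖q l‖ = 1)
    (qm qp : V3)
    (hqm : qm ∈ ⋃ l, ({q l, -q l} : Set V3))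
    (hqp : qp ∈ ⋃ l, ({q l, -q l} : Set V3))
    (hne : qm ≠ qp)
    (w : ℝ → V3) (hwc : Continuous w)
    (hL : ∀ t, w t ∈ ⋃ l, (Submodule.span ℝ {q l} : Set V3))
    (hbot : Tendsto w atBot (nhds qm)) (htop : Tendsto w atTop (nhds qp)) :
    ∃ t₀, w t₀ = 0 := by
  by_contra h
  push_neg at h
  obtain ⟨l₀, hl₀⟩ := Set.mem_iUnion.mp (hL 0)
  have hall : ∀ t, w t ∈ (Submodule.span ℝ {q l₀} : Set V3) := by
    intro t
    exact aux_stay q w hwc hL isPreconnected_univ (fun t _ => h t) (Set.mem_univ 0) hl₀ t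
      (Set.mem_univ t)
  have hEc : IsClosed (Submodule.span ℝ {q l₀} : Set V3) :=
    (Submodule.span ℝ {q l₀}).closed_of_finiteDimensional
  have hqmE : qm ∈ (Submodule.span ℝ {q l₀} : Set V3) :=
    hEc.mem_of_tendsto hbot (Eventually.of_forall hall)
  have hqpE : qp ∈ (Submodule.span ℝ {q l₀} : Set V3) :=
    hEc.mem_of_tendsto htop (Eventually.of_forall hall)
  obtain ⟨cm, hcm⟩ := Submodule.mem_span_singleton.mp hqmE
  obtain ⟨cp, hcp⟩ := Submodule.mem_span_singleton.mp hqpE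
  have hcm1 : |cm| = 1 := by
    have := aux_norm_one q hq hqm
    rw [← hcm, norm_smul, hq l₀, Real.norm_eq_abs, mul_one] at this
    exact this
  have hcp1 : |cp| = 1 := by
    have := aux_norm_one q hq hqp
    rw [← hcp, norm_smul, hq l₀, Real.norm_eq_abs, mul_one] at this
    exact this
  have hccne : cm ≠ cp := by
    intro h'
    exact hne (by rw [← hcm, ← hcp, h'])
  have hcmcp : cm * cp = -1 := by
    rcases (abs_eq (by norm_num : (0:ℝ) ≤ 1)).mp hcm1 with h1 | h1 <;>
      rcases (abs_eq (by norm_num : (0:ℝ) ≤ 1)).mp hcp1 with h2 | h2 <;>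
      rw [h1, h2] <;> rw [h1, h2] at hccne <;> norm_num at hccne <;> norm_num
  set s : ℝ → ℝ := fun t => (inner ℝ (w t) (q l₀) : ℝ) with hs
  have hscont : Continuous s := (hwc.inner continuous_const)
  have hinner : ∀ (c : ℝ), (inner ℝ (c • q l₀) (q l₀) : ℝ) = c := by
    intro c
    rw [real_inner_smul_left, real_inner_self_eq_norm_sq, hq l₀]
    ring
  have hs0 : ∀ t, s t ≠ 0 := by
    intro t hst
    obtain ⟨c, hc⟩ := Submodule.mem_span_singleton.mp (hall t)
    have : s t = c := by rw [hs]; simp only [← hc, hinner]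
    apply h t
    rw [← hc, ← this, hst, zero_smul]
  have hsbot : Tendsto s atBot (nhds cm) := by
    have : Tendsto (fun t => (inner ℝ (w t) (q l₀) : ℝ)) atBot (nhds ((inner ℝ qm (q l₀)) : ℝ)) :=
      hbot.inner tendsto_const_nhds
    rwa [← hcm, hinner] at this
  have hstop : Tendsto s atTop (nhds cp) := by
    have : Tendsto (fun t => (inner ℝ (w t) (q l₀) : ℝ)) atTop (nhds ((inner ℝ qp (q l₀)) : ℝ)) :=
      htop.inner tendsto_const_nhds
    rwa [← hcp, hinner] at this
  set σ : ℝ → ℝ := fun t => cm * s t with hσ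
  have hσbot : Tendsto σ atBot (nhds 1) := by
    have := hsbot.const_mul cm
    have h1 : cm * cm = 1 := by
      rcases abs_eq (by norm_num : (0:ℝ) ≤ 1) |>.mp hcm1 with h1 | h1 <;> rw [h1] <;> norm_num
    rwa [h1] at this
  have hσtop : Tendsto σ atTop (nhds (-1)) := by
    have := hstop.const_mul cm
    rwa [hcmcp] at this
  obtain ⟨t1, ht1⟩ := (hσbot.eventually (eventually_gt_nhds (by norm_num : (0:ℝ) < 1))).exists
  obtain ⟨t2, ht2⟩ := (hσtop.eventually (eventually_lt_nhds (by norm_num : (-1:ℝ) < 0))).exists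
  have hσcont : Continuous σ := continuous_const.mul hscont
  have : (0:ℝ) ∈ Set.uIcc (σ t1) (σ t2) := Set.mem_uIcc.mpr (Or.inr ⟨ht2.le, ht1.le⟩)
  obtain ⟨t, _, ht⟩ := intermediate_value_uIcc hσcont.continuousOn this
  have hcm0 : cm ≠ 0 := by intro h'; rw [h'] at hcm1; simp at hcm1
  have h2 : cm * s t = 0 := ht
  rcases mul_eq_zero.mp h2 with h3 | h3
  · exact hcm0 h3
  · exact hs0 t h3

lemma aux_piece {k : ℕ} (q : Fin k → V3) (hq : ∀ l, ‖q l‖ = 1)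
    (w : ℝ → V3) (hw : ContDiff ℝ 1 w)
    (hL : ∀ t, w t ∈ ⋃ l, (Submodule.span ℝ {q l} : Set V3))
    {ε a b : ℝ} (hε : 0 < ε) (hε2 : ε < 1/4) (hab : a < b)
    (ha : ‖w a‖ ≤ ε) (hb : |‖w b‖ - 1| ≤ ε/2) :
    ENNReal.ofReal (4/3 - 4*ε)
      ≤ ∫⁻ t in Set.Ioo a b, ENNReal.ofReal ((‖w t‖^2 - 1)^2 + ‖deriv w t‖^2) := by
  have hwc : Continuous w := hw.continuous
  have hwd : Differentiable ℝ w := hw.differentiable one_ne_zero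
  have hw' : Continuous (deriv w) := hw.continuous_deriv le_rfl
  set A : Set ℝ := Set.Icc a b ∩ {t : ℝ | ‖w t‖ ≤ ε} with hA
  have hAc : IsClosed A := isClosed_Icc.inter (isClosed_le hwc.norm continuous_const)
  have hAne : A.Nonempty := ⟨a, ⟨le_rfl, hab.le⟩, ha⟩
  have hAbdd : BddAbove A := (bddAbove_Icc (a := a) (b := b)).mono Set.inter_subset_left
  set a' := sSup A with ha'def
  have ha' : a' ∈ A := hAc.csSup_mem hAne hAbdd
  obtain ⟨ha'1, ha'2⟩ := ha'
  have hbε : 1 - ε/2 ≤ ‖w b‖ := by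
    rcases abs_le.mp hb with ⟨h1, _⟩; linarith
  have ha'b : a' < b := by
    rcases lt_or_eq_of_le ha'1.2 with h | h
    · exact h
    · exfalso; rw [h] at ha'2; simp only [Set.mem_setOf_eq] at ha'2; linarith
  have hgt : ∀ t ∈ Set.Ioc a' b, ε < ‖w t‖ := by
    intro t ht
    by_contra hle
    push_neg at hle
    have : t ∈ A := ⟨⟨le_trans ha'1.1 ht.1.le, ht.2⟩, hle⟩
    exact absurd (le_csSup hAbdd this) (not_le.mpr ht.1)
  have hne0 : ∀ t ∈ Set.Ioc a' b, w t ≠ 0 := by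
    intro t ht h0
    have := hgt t ht
    rw [h0, norm_zero] at this
    linarith
  obtain ⟨l₀, hl₀⟩ := Set.mem_iUnion.mp (hL b)
  have hline : ∀ t ∈ Set.Ioc a' b, w t ∈ (Submodule.span ℝ {q l₀} : Set V3) :=
    aux_stay q w hwc hL isPreconnected_Ioc hne0 ⟨ha'b, le_rfl⟩ hl₀
  set s : ℝ → ℝ := fun t => (inner ℝ (w t) (q l₀) : ℝ) with hs
  set s' : ℝ → ℝ := fun t => (inner ℝ (deriv w t) (q l₀) : ℝ) with hs'
  have hinner : ∀ (c : ℝ), (inner ℝ (c • q l₀) (q l₀) : ℝ) = c := by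
    intro c
    rw [real_inner_smul_left, real_inner_self_eq_norm_sq, hq l₀]
    ring
  have hsd : ∀ t, HasDerivAt s (s' t) t := by
    intro t
    have h1 : HasDerivAt w (deriv w t) t := (hwd t).hasDerivAt
    have := HasDerivAt.inner ℝ h1 (hasDerivAt_const t (q l₀))
    simpa using this
  have hscont : Continuous s := hwc.inner continuous_const
  have hs'cont : Continuous s' := hw'.inner continuous_const
  set u : ℝ → ℝ := fun t => s t - (s t)^3/3 with hu
  set u' : ℝ → ℝ := fun t => (1 - (s t)^2) * s' t with hu'
  have hud : ∀ t, HasDerivAt u (u' t) t := by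
    intro t
    have : HasDerivAt (fun x => s x - s x ^ 3 / 3) (s' t - ((3:ℕ):ℝ) * s t ^ (3 - 1) * s' t / 3) t :=
      ((hsd t).sub (((hsd t).pow 3).div_const 3))
    convert this using 1
    push_cast
    ring
  have hu'cont : Continuous u' :=
    ((continuous_const.sub (hscont.pow 2)).mul hs'cont)
  have hrep : ∀ t ∈ Set.Ioc a' b, ‖w t‖ = |s t| := by
    intro t ht
    obtain ⟨c, hc⟩ := Submodule.mem_span_singleton.mp (hline t ht)
    have hsc : s t = c := by rw [hs]; simp only [← hc, hinner]
    rw [← hc, norm_smul, hq l₀, Real.norm_eq_abs, mul_one, hsc]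
  have hCS : ∀ t, |s' t| ≤ ‖deriv w t‖ := by
    intro t
    have := abs_real_inner_le_norm (deriv w t) (q l₀)
    rwa [hq l₀, mul_one] at this
  have key : ∀ t ∈ Set.Ioo a' b, 2 * |u' t| ≤ (‖w t‖^2 - 1)^2 + ‖deriv w t‖^2 := by
    intro t ht
    have hmem : t ∈ Set.Ioc a' b := ⟨ht.1, ht.2.le⟩
    have h1 : ‖w t‖^2 = (s t)^2 := by rw [hrep t hmem, sq_abs]
    rw [h1, hu']
    rw [abs_mul]
    have h2 := hCS t
    have h3 : |1 - s t ^ 2| * |s' t| ≤ |1 - s t ^ 2| * ‖deriv w t‖ :=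
      mul_le_mul_of_nonneg_left h2 (abs_nonneg _)
    have h4 : ((s t)^2 - 1)^2 = |1 - s t ^2|^2 := by
      rw [sq_abs]; ring
    nlinarith [sq_nonneg (|1 - s t ^ 2| - ‖deriv w t‖), abs_nonneg (1 - s t ^2),
      norm_nonneg (deriv w t), abs_nonneg (s' t)]
  -- FTC part
  have hInt : IntervalIntegrable u' volume a' b := hu'cont.intervalIntegrable a' b
  have hFTC : ∫ t in a'..b, u' t = u b - u a' :=
    intervalIntegral.integral_eq_sub_of_hasDerivAt (fun t _ => hud t) hInt
  have habs : |u b - u a'| ≤ ∫ t in a'..b, |u' t| := by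
    rw [← hFTC]
    exact intervalIntegral.abs_integral_le_integral_abs ha'b.le
  -- numeric bound
  have hsa' : |s a'| ≤ ε := by
    have := abs_real_inner_le_norm (w a') (q l₀)
    rw [hq l₀, mul_one] at this
    exact le_trans this ha'2
  have hsb : |s b| = ‖w b‖ := (hrep b ⟨ha'b, le_rfl⟩).symm
  have hnum : 2/3 - 5*ε/3 ≤ |u b - u a'| := by
    have h1 : |s b| - |s b|^3/3 ≤ |u b| := by
      have he : u b = s b * (1 - (s b)^2/3) := by rw [hu]; ring
      rw [he, abs_mul]
      have h2 : (1 - (s b)^2/3) ≤ |1 - (s b)^2/3| := le_abs_self _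
      nlinarith [abs_nonneg (s b), sq_abs (s b)]
    have h2 : |u a'| ≤ |s a'| + |s a'|^3/3 := by
      rw [hu]
      calc |s a' - (s a')^3/3| ≤ |s a'| + |(s a')^3/3| := abs_sub _ _
        _ = |s a'| + |s a'|^3/3 := by rw [abs_div, abs_pow]; norm_num
    have h3 := abs_sub_abs_le_abs_sub (u b) (u a')
    have hr1 : 1 - ε/2 ≤ |s b| := by rw [hsb]; exact hbε
    have hr2 : |s b| ≤ 1 + ε/2 := by
      rw [hsb]; rcases abs_le.mp hb with ⟨_, h⟩; linarith
    nlinarith [abs_nonneg (s a'), abs_nonneg (s b), sq_nonneg (|s b| - 1),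
      sq_nonneg (|s a'|), hsa', hε, hε2]
  -- assemble
  have hIoo : Set.Ioo a' b ⊆ Set.Ioo a b := Set.Ioo_subset_Ioo ha'1.1 le_rfl
  have step1 : ∫⁻ t in Set.Ioo a' b, ENNReal.ofReal ((‖w t‖^2 - 1)^2 + ‖deriv w t‖^2)
      ≤ ∫⁻ t in Set.Ioo a b, ENNReal.ofReal ((‖w t‖^2 - 1)^2 + ‖deriv w t‖^2) :=
    lintegral_mono_set hIoo
  refine le_trans ?_ step1
  have step2 : ∫⁻ t in Set.Ioo a' b, ENNReal.ofReal (2 * |u' t|)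
      ≤ ∫⁻ t in Set.Ioo a' b, ENNReal.ofReal ((‖w t‖^2 - 1)^2 + ‖deriv w t‖^2) :=
    setLIntegral_mono' measurableSet_Ioo (fun t ht => ENNReal.ofReal_le_ofReal (key t ht))
  refine le_trans ?_ step2
  have hIntOn : IntegrableOn (fun t => 2 * |u' t|) (Set.Ioo a' b) volume :=
    ((continuous_const.mul hu'cont.abs).integrableOn_Icc).mono_set Set.Ioo_subset_Icc_self
  have step3 : ENNReal.ofReal (∫ t in Set.Ioo a' b, 2 * |u' t|)
      = ∫⁻ t in Set.Ioo a' b, ENNReal.ofReal (2 * |u' t|) :=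
    ofReal_integral_eq_lintegral_ofReal hIntOn
      (ae_of_all _ (fun t => by positivity))
  rw [← step3]
  apply ENNReal.ofReal_le_ofReal
  have step4 : ∫ t in Set.Ioo a' b, 2 * |u' t| = ∫ t in a'..b, 2 * |u' t| := by
    rw [intervalIntegral.integral_of_le ha'b.le, MeasureTheory.integral_Ioc_eq_integral_Ioo]
  rw [step4, intervalIntegral.integral_const_mul]
  calc 4/3 - 4*ε ≤ 2 * (2/3 - 5*ε/3) := by linarith
    _ ≤ 2 * |u b - u a'| := by linarith [hnum]
    _ ≤ 2 * ∫ t in a'..b, |u' t| := by linarith [habs]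


/-- The cross product on Euclidean `ℝ³`. -/
noncomputable def cross3 (a b : EuclideanSpace ℝ (Fin 3)) : EuclideanSpace ℝ (Fin 3) :=
  (WithLp.equiv 2 (Fin 3 → ℝ)).symm
    (crossProduct ((WithLp.equiv 2 (Fin 3 → ℝ)) a) ((WithLp.equiv 2 (Fin 3 → ℝ)) b))

/-- Let `q₋ ≠ q₊` be two elements of `Q_k = {±q₁,…,±q_k}`. Every `C¹` map
`w : ℝ → ℝ³` taking values in `L_k = ⋃ span(q_l)` and connecting `q₋` (at `−∞`) to `q₊`
(at `+∞`) has energy at least `8/3`. -/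
theorem stmt1 (k : ℕ) (hk : 1 ≤ k) (q : Fin k → EuclideanSpace ℝ (Fin 3))
    (hq : ∀ l, ‖q l‖ = 1) (hqinj : Function.Injective q)
    (qm qp : EuclideanSpace ℝ (Fin 3))
    (hqm : qm ∈ ⋃ l, ({q l, -q l} : Set (EuclideanSpace ℝ (Fin 3))))
    (hqp : qp ∈ ⋃ l, ({q l, -q l} : Set (EuclideanSpace ℝ (Fin 3))))
    (hne : qm ≠ qp)
    (w : ℝ → EuclideanSpace ℝ (Fin 3)) (hw : ContDiff ℝ 1 w)
    (hL : ∀ t : ℝ, w t ∈ ⋃ l, (Submodule.span ℝ {q l} : Set (EuclideanSpace ℝ (Fin 3))))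
    (hbot : Tendsto w atBot (nhds qm)) (htop : Tendsto w atTop (nhds qp)) :
    ENNReal.ofReal (8 / 3)
      ≤ ∫⁻ t : ℝ, ENNReal.ofReal ((‖w t‖ ^ 2 - 1) ^ 2 + ‖deriv w t‖ ^ 2) := by
  have hwc : Continuous w := hw.continuous
  obtain ⟨t₀, ht₀⟩ := aux_exists_zero q hq qm qp hqm hqp hne w hwc hL hbot htop
  set I := ∫⁻ t : ℝ, ENNReal.ofReal ((‖w t‖ ^ 2 - 1) ^ 2 + ‖deriv w t‖ ^ 2) with hI
  suffices H : ∀ ε : ℝ, 0 < ε → ε < 1/4 → ENNReal.ofReal (8/3 - 8*ε) ≤ I by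
    by_contra hcon
    push_neg at hcon
    have hItop : I ≠ ⊤ := hcon.ne_top
    set r := I.toReal with hr
    have hIr : I = ENNReal.ofReal r := (ENNReal.ofReal_toReal hItop).symm
    have hrlt : r < 8/3 := by
      have := hcon
      rw [hIr] at this
      have h83 : (0:ℝ) ≤ 8/3 := by norm_num
      exact (ENNReal.ofReal_lt_ofReal_iff (by norm_num)).mp this
    have hr0 : 0 ≤ r := ENNReal.toReal_nonneg
    set ε := min ((8/3 - r)/16) (1/8) with hε
    have hε0 : 0 < ε := lt_min (by linarith) (by norm_num)
    have hε14 : ε < 1/4 := lt_of_le_of_lt (min_le_right _ _) (by norm_num)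
    have hkey : r < 8/3 - 8*ε := by
      have h1 : ε ≤ (8/3 - r)/16 := min_le_left _ _
      linarith
    have := H ε hε0 hε14
    rw [hIr] at this
    have := (ENNReal.ofReal_le_ofReal_iff hr0).mp this
    linarith
  intro ε hε hε2
  have hnqp : ‖qp‖ = 1 := aux_norm_one q hq hqp
  have hnqm : ‖qm‖ = 1 := aux_norm_one q hq hqm
  -- choose b
  have htopn : Tendsto (fun t => |‖w t‖ - 1|) atTop (nhds 0) := by
    have h1 : Tendsto (fun t => ‖w t‖) atTop (nhds ‖qp‖) := htop.norm
    rw [hnqp] at h1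
    have h2 := (h1.sub_const 1).abs
    simpa using h2
  have hbotn : Tendsto (fun t => |‖w t‖ - 1|) atBot (nhds 0) := by
    have h1 : Tendsto (fun t => ‖w t‖) atBot (nhds ‖qm‖) := hbot.norm
    rw [hnqm] at h1
    have h2 := (h1.sub_const 1).abs
    simpa using h2
  obtain ⟨b, hb1, hb2⟩ :=
    ((htopn.eventually (eventually_le_nhds (by linarith : (0:ℝ) < ε/2))).and
      (eventually_gt_atTop t₀)).exists
  obtain ⟨c, hc1, hc2⟩ :=
    ((hbotn.eventually (eventually_le_nhds (by linarith : (0:ℝ) < ε/2))).and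
      (eventually_lt_atBot t₀)).exists
  -- right piece
  have hwt₀ : ‖w t₀‖ ≤ ε := by rw [ht₀, norm_zero]; exact hε.le
  have Hr := aux_piece q hq w hw hL hε hε2 hb2 hwt₀ hb1
  -- left piece via reflection
  set wn : ℝ → V3 := fun t => w (-t) with hwn
  have hwnC : ContDiff ℝ 1 wn := hw.comp (contDiff_neg)
  have hLn : ∀ t, wn t ∈ ⋃ l, (Submodule.span ℝ {q l} : Set V3) := fun t => hL (-t)
  have han : ‖wn (-t₀)‖ ≤ ε := by
    simp only [hwn, neg_neg]
    exact hwt₀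
  have hbn : |‖wn (-c)‖ - 1| ≤ ε/2 := by
    simp only [hwn, neg_neg]
    exact hc1
  have Hl := aux_piece q hq wn hwnC hLn hε hε2 (neg_lt_neg hc2) han hbn
  have hderivn : ∀ t, ‖deriv wn t‖ = ‖deriv w (-t)‖ := by
    intro t
    rw [hwn]
    rw [deriv_comp_neg]
    rw [norm_neg]
  have hfun : (fun t => ENNReal.ofReal ((‖wn t‖^2 - 1)^2 + ‖deriv wn t‖^2))
      = fun t => ENNReal.ofReal ((‖w (-t)‖^2 - 1)^2 + ‖deriv w (-t)‖^2) := by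
    funext t
    rw [hderivn t]
  rw [show (∫⁻ t in Set.Ioo (-t₀) (-c),
        ENNReal.ofReal ((‖wn t‖^2 - 1)^2 + ‖deriv wn t‖^2))
      = ∫⁻ t in Set.Ioo (-t₀) (-c),
        ENNReal.ofReal ((‖w (-t)‖^2 - 1)^2 + ‖deriv w (-t)‖^2) from by rw [hfun]] at Hl
  have hmp : MeasurePreserving (Neg.neg : ℝ → ℝ) volume volume :=
    Measure.measurePreserving_neg _
  have hemb : MeasurableEmbedding (Neg.neg : ℝ → ℝ) :=
    (Homeomorph.neg ℝ).measurableEmbedding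
  have hpre : (Neg.neg : ℝ → ℝ) ⁻¹' (Set.Ioo c t₀) = Set.Ioo (-t₀) (-c) := by
    ext x
    simp only [Set.mem_preimage, Set.mem_Ioo]
    constructor
    · rintro ⟨h1, h2⟩; constructor <;> linarith
    · rintro ⟨h1, h2⟩; constructor <;> linarith
  have hchg := hmp.setLIntegral_comp_preimage_emb hemb
    (fun t => ENNReal.ofReal ((‖w t‖^2 - 1)^2 + ‖deriv w t‖^2)) (Set.Ioo c t₀)
  rw [hpre] at hchg
  rw [hchg] at Hl
  -- combine
  have hdisj : Disjoint (Set.Ioo c t₀) (Set.Ioo t₀ b) := by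
    rw [Set.disjoint_left]
    rintro x ⟨_, h1⟩ ⟨h2, _⟩
    linarith
  have hsum : ∫⁻ t in Set.Ioo c t₀ ∪ Set.Ioo t₀ b,
        ENNReal.ofReal ((‖w t‖^2 - 1)^2 + ‖deriv w t‖^2)
      = (∫⁻ t in Set.Ioo c t₀, ENNReal.ofReal ((‖w t‖^2 - 1)^2 + ‖deriv w t‖^2))
        + ∫⁻ t in Set.Ioo t₀ b, ENNReal.ofReal ((‖w t‖^2 - 1)^2 + ‖deriv w t‖^2) :=
    lintegral_union measurableSet_Ioo hdisj
  calc ENNReal.ofReal (8/3 - 8*ε)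
      ≤ ENNReal.ofReal (4/3 - 4*ε) + ENNReal.ofReal (4/3 - 4*ε) := by
        rw [← ENNReal.ofReal_add (by linarith) (by linarith)]
        apply ENNReal.ofReal_le_ofReal
        linarith
    _ ≤ (∫⁻ t in Set.Ioo c t₀, ENNReal.ofReal ((‖w t‖^2 - 1)^2 + ‖deriv w t‖^2))
        + ∫⁻ t in Set.Ioo t₀ b, ENNReal.ofReal ((‖w t‖^2 - 1)^2 + ‖deriv w t‖^2) :=
        add_le_add Hl Hr
    _ = ∫⁻ t in Set.Ioo c t₀ ∪ Set.Ioo t₀ b,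
        ENNReal.ofReal ((‖w t‖^2 - 1)^2 + ‖deriv w t‖^2) := hsum.symm
    _ ≤ I := setLIntegral_le_lintegral _ _
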